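/- arXiv:2501.07561 — 3 statements merged into one kernel-verified Lean document; each statement's English description precedes it below -/
import Mathlib

section
/- Let M_s, M_r, D, Z be random variables on a probability space taking values in finite nonempty types 𝓜s, 𝓜r, 𝓓, 𝓩 respectively. Assume: (i) M_s is uniformly distributed on 𝓜s, M_r is uniformly distributed on 𝓜r, and M_s and M_r are independent; (ii) D = f(M_s, M_r) almost surely for some function f : 𝓜s × 𝓜r → 𝓓; (iii) M_r = g(D) almost surely for some function g : 𝓓 → 𝓜r; (iv) the pair (M_s, M_r) is conditionally independent of Z given D; (v) there is ε ∈ [0,1] with H(M_r | (M_s, Z)) ≤ log 2 + ε · log |𝓜r|. Then I(M_s; Z) ≤ I(D; Z) − (1 − ε) · log |𝓜r| + log 2. -/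
set_option maxHeartbeats 1000000

open MeasureTheory ProbabilityTheory Real

/-- Shannon entropy (natural logarithm) of a random variable with values in a finite type. -/
noncomputable def Hent {Ω : Type*} [MeasurableSpace Ω] (μ : Measure Ω)
    {α : Type*} [Fintype α] (X : Ω → α) : ℝ :=
  ∑ a : α, Real.negMulLog (μ (X ⁻¹' {a})).toReal

/-- Conditional Shannon entropy `H(X | Y) = H(X, Y) - H(Y)`. -/
noncomputable def Hcond {Ω : Type*} [MeasurableSpace Ω] (μ : Measure Ω)
    {α β : Type*} [Fintype α] [Fintype β] (X : Ω → α) (Y : Ω → β) : ℝ :=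
  Hent μ (fun ω => (X ω, Y ω)) - Hent μ Y

/-- Mutual information `I(X; Y) = H(X) + H(Y) - H(X, Y)`. -/
noncomputable def MutInf {Ω : Type*} [MeasurableSpace Ω] (μ : Measure Ω)
    {α β : Type*} [Fintype α] [Fintype β] (X : Ω → α) (Y : Ω → β) : ℝ :=
  Hent μ X + Hent μ Y - Hent μ (fun ω => (X ω, Y ω))

section Helpers

lemma gibbs {ι : Type*} (s : Finset ι) (p q : ι → ℝ) (hp : ∀ i ∈ s, 0 ≤ p i)
    (hq : ∀ i ∈ s, 0 ≤ q i) (hpq : ∀ i ∈ s, p i ≠ 0 → q i ≠ 0) :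
    ∑ i ∈ s, p i * (Real.log (q i) - Real.log (p i)) ≤ ∑ i ∈ s, q i - ∑ i ∈ s, p i := by
  rw [← Finset.sum_sub_distrib]
  refine Finset.sum_le_sum fun i hi => ?_
  rcases eq_or_lt_of_le (hp i hi) with h0 | h0
  · rw [← h0]; simpa using hq i hi
  · have hq0 : 0 < q i := lt_of_le_of_ne (hq i hi) (Ne.symm (hpq i hi (ne_of_gt h0)))
    have hlog : Real.log (q i) - Real.log (p i) = Real.log (q i / p i) :=
      (Real.log_div (ne_of_gt hq0) (ne_of_gt h0)).symm
    rw [hlog]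
    have hle : Real.log (q i / p i) ≤ q i / p i - 1 :=
      Real.log_le_sub_one_of_pos (div_pos hq0 h0)
    calc p i * Real.log (q i / p i) ≤ p i * (q i / p i - 1) :=
          mul_le_mul_of_nonneg_left hle (le_of_lt h0)
      _ = q i - p i := by field_simp


lemma sum_comb {ι : Type*} [Fintype ι] (f g h k m : ι → ℝ)
    (H : ∀ i, f i + g i - h i - k i = m i) :
    (∑ i, f i) + (∑ i, g i) - (∑ i, h i) - (∑ i, k i) = ∑ i, m i := by
  rw [← Finset.sum_add_distrib, ← Finset.sum_sub_distrib, ← Finset.sum_sub_distrib]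
  exact Finset.sum_congr rfl fun i _ => H i

variable {Ω : Type*} [MeasurableSpace Ω] (μ : Measure Ω) [IsProbabilityMeasure μ]
variable {α β γ : Type*} [Fintype α] [Fintype β] [Fintype γ]
  [MeasurableSpace α] [MeasurableSingletonClass α]
  [MeasurableSpace β] [MeasurableSingletonClass β]
  [MeasurableSpace γ] [MeasurableSingletonClass γ]

lemma meas_eq_sum_inter {S : Set Ω} (hS : MeasurableSet S) {V : Ω → β} (hV : Measurable V) :
    (μ S).toReal = ∑ b : β, (μ (S ∩ V ⁻¹' {b})).toReal := by
  have h1 : S = ⋃ b : β, S ∩ V ⁻¹' {b} := by ext ω; simp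
  have h2 : μ S = ∑' b : β, μ (S ∩ V ⁻¹' {b}) := by
    nth_rewrite 1 [h1]
    refine measure_iUnion ?_ (fun b => hS.inter (hV (measurableSet_singleton b)))
    intro b b' hbb'
    simp only [Function.onFun, Set.disjoint_left]
    rintro ω ⟨-, h1⟩ ⟨-, h2⟩
    exact hbb' (by simpa using h1.symm.trans h2)
  rw [h2, tsum_fintype, ENNReal.toReal_sum]
  exact fun b _ => measure_ne_top μ _

lemma core_diff {A : Ω → α} {B : Ω → β} {C : Ω → γ}
    (hA : Measurable A) (hB : Measurable B) (hC : Measurable C) :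
    (∑ y : α × β, Real.negMulLog (μ (A ⁻¹' {y.1} ∩ B ⁻¹' {y.2})).toReal)
    + (∑ z : β × γ, Real.negMulLog (μ (B ⁻¹' {z.1} ∩ C ⁻¹' {z.2})).toReal)
    - (∑ b : β, Real.negMulLog (μ (B ⁻¹' {b})).toReal)
    - (∑ x : α × β × γ,
        Real.negMulLog (μ (A ⁻¹' {x.1} ∩ B ⁻¹' {x.2.1} ∩ C ⁻¹' {x.2.2})).toReal)
    = ∑ x : α × β × γ,
        (μ (A ⁻¹' {x.1} ∩ B ⁻¹' {x.2.1} ∩ C ⁻¹' {x.2.2})).toReal *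
          (Real.log ((μ (A ⁻¹' {x.1} ∩ B ⁻¹' {x.2.1} ∩ C ⁻¹' {x.2.2})).toReal)
           - Real.log ((μ (A ⁻¹' {x.1} ∩ B ⁻¹' {x.2.1})).toReal
               * (μ (B ⁻¹' {x.2.1} ∩ C ⁻¹' {x.2.2})).toReal
               / (μ (B ⁻¹' {x.2.1})).toReal)) := by
  set p3 : α → β → γ → ℝ :=
    fun a b c => (μ (A ⁻¹' {a} ∩ B ⁻¹' {b} ∩ C ⁻¹' {c})).toReal with hp3
  set pAB : α → β → ℝ := fun a b => (μ (A ⁻¹' {a} ∩ B ⁻¹' {b})).toReal with hpAB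
  set pBC : β → γ → ℝ := fun b c => (μ (B ⁻¹' {b} ∩ C ⁻¹' {c})).toReal with hpBC
  set pB : β → ℝ := fun b => (μ (B ⁻¹' {b})).toReal with hpB
  have mAB : ∀ a b, pAB a b = ∑ c, p3 a b c := fun a b =>
    meas_eq_sum_inter μ ((hA (measurableSet_singleton a)).inter
      (hB (measurableSet_singleton b))) hC
  have mBC : ∀ b c, pBC b c = ∑ a, p3 a b c := by
    intro b c
    have h := meas_eq_sum_inter μ ((hB (measurableSet_singleton b)).inter
      (hC (measurableSet_singleton c))) hA
    have hset : ∀ a : α, (B ⁻¹' {b} ∩ C ⁻¹' {c}) ∩ A ⁻¹' {a}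
        = A ⁻¹' {a} ∩ B ⁻¹' {b} ∩ C ⁻¹' {c} := by
      intro a; ext ω; simp only [Set.mem_inter_iff, Set.mem_preimage,
        Set.mem_singleton_iff]; tauto
    simp only [hset] at h
    exact h
  have mB : ∀ b, pB b = ∑ c, pBC b c := fun b =>
    meas_eq_sum_inter μ (hB (measurableSet_singleton b)) hC
  have mB' : ∀ b, pB b = ∑ a, ∑ c, p3 a b c := by
    intro b
    rw [Finset.sum_comm, mB b]
    exact Finset.sum_congr rfl fun c _ => mBC b c
  have mono : ∀ {s t : Set Ω}, s ⊆ t → (μ s).toReal ≤ (μ t).toReal := fun hst =>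
    ENNReal.toReal_mono (measure_ne_top μ _) (measure_mono hst)
  have le1 : ∀ a b c, p3 a b c ≤ pAB a b := fun a b c =>
    mono Set.inter_subset_left
  have le2 : ∀ a b c, p3 a b c ≤ pBC b c := fun a b c => by
    refine mono ?_; rintro ω ⟨⟨h1, h2⟩, h3⟩; exact ⟨h2, h3⟩
  have le3 : ∀ a b c, p3 a b c ≤ pB b := fun a b c => by
    refine mono ?_; rintro ω ⟨⟨h1, h2⟩, h3⟩; exact h2
  have nn : ∀ a b c, 0 ≤ p3 a b c := fun a b c => ENNReal.toReal_nonneg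
  have eAB : (∑ a, ∑ b, ∑ c, -(p3 a b c * Real.log (pAB a b)))
      = ∑ a, ∑ b, Real.negMulLog (pAB a b) := by
    refine Finset.sum_congr rfl fun a _ => Finset.sum_congr rfl fun b _ => ?_
    rw [Finset.sum_neg_distrib, ← Finset.sum_mul, ← mAB a b, Real.negMulLog, neg_mul]
  have eBC : (∑ a, ∑ b, ∑ c, -(p3 a b c * Real.log (pBC b c)))
      = ∑ b, ∑ c, Real.negMulLog (pBC b c) := by
    rw [Finset.sum_comm]
    refine Finset.sum_congr rfl fun b _ => ?_
    rw [Finset.sum_comm]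
    refine Finset.sum_congr rfl fun c _ => ?_
    rw [Finset.sum_neg_distrib, ← Finset.sum_mul, ← mBC b c, Real.negMulLog, neg_mul]
  have eB : (∑ a, ∑ b, ∑ c, -(p3 a b c * Real.log (pB b)))
      = ∑ b : β, Real.negMulLog (pB b) := by
    rw [Finset.sum_comm]
    refine Finset.sum_congr rfl fun b _ => ?_
    simp only [Finset.sum_neg_distrib, ← Finset.sum_mul]
    rw [← mB' b, Real.negMulLog, neg_mul]
  simp only [Fintype.sum_prod_type]
  rw [← eAB, ← eBC, ← eB]
  refine sum_comb _ _ _ _ _ fun a => sum_comb _ _ _ _ _ fun b =>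
    sum_comb _ _ _ _ _ fun c => ?_
  rcases eq_or_lt_of_le (nn a b c) with h0 | h0
  · have h0' : p3 a b c = 0 := h0.symm
    simp [h0', Real.negMulLog]
    exact Or.inr h0'
  · have hAB0 : 0 < pAB a b := lt_of_lt_of_le h0 (le1 a b c)
    have hBC0 : 0 < pBC b c := lt_of_lt_of_le h0 (le2 a b c)
    have hB0 : 0 < pB b := lt_of_lt_of_le h0 (le3 a b c)
    rw [Real.log_div (by positivity) (ne_of_gt hB0),
        Real.log_mul (ne_of_gt hAB0) (ne_of_gt hBC0), Real.negMulLog]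
    ring

omit [IsProbabilityMeasure μ] in
lemma Hent_congr {X : Ω → α} {Y : Ω → β} (e : α ≃ β) (h : ∀ ω, Y ω = e (X ω)) :
    Hent μ Y = Hent μ X := by
  unfold Hent
  rw [← Equiv.sum_comp e (fun b => Real.negMulLog (μ (Y ⁻¹' {b})).toReal)]
  refine Finset.sum_congr rfl fun a _ => ?_
  have hset : Y ⁻¹' {e a} = X ⁻¹' {a} := by
    ext ω; simp [h ω, e.injective.eq_iff]
  rw [hset]

omit [IsProbabilityMeasure μ]
  [MeasurableSpace α] [MeasurableSingletonClass α]
  [MeasurableSpace β] [MeasurableSingletonClass β]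
  [MeasurableSpace γ] [MeasurableSingletonClass γ] in
lemma Hent_pair_eq {A : Ω → α} {B : Ω → β} :
    Hent μ (fun ω => (A ω, B ω))
      = ∑ y : α × β, Real.negMulLog (μ (A ⁻¹' {y.1} ∩ B ⁻¹' {y.2})).toReal := by
  unfold Hent
  refine Finset.sum_congr rfl fun y _ => ?_
  have hset : (fun ω => (A ω, B ω)) ⁻¹' {y} = A ⁻¹' {y.1} ∩ B ⁻¹' {y.2} := by
    ext ω; simp [Prod.ext_iff]
  rw [hset]

omit [IsProbabilityMeasure μ]
  [MeasurableSpace α] [MeasurableSingletonClass α]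
  [MeasurableSpace β] [MeasurableSingletonClass β]
  [MeasurableSpace γ] [MeasurableSingletonClass γ] in
lemma Hent_triple_eq {A : Ω → α} {B : Ω → β} {C : Ω → γ} :
    Hent μ (fun ω => (A ω, B ω, C ω))
      = ∑ x : α × β × γ,
          Real.negMulLog (μ (A ⁻¹' {x.1} ∩ B ⁻¹' {x.2.1} ∩ C ⁻¹' {x.2.2})).toReal := by
  unfold Hent
  refine Finset.sum_congr rfl fun x _ => ?_
  have hset : (fun ω => (A ω, B ω, C ω)) ⁻¹' {x}
      = A ⁻¹' {x.1} ∩ B ⁻¹' {x.2.1} ∩ C ⁻¹' {x.2.2} := by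
    ext ω; simp [Prod.ext_iff, and_assoc]
  rw [hset]

lemma sum_probs {X : Ω → α} (hX : Measurable X) :
    ∑ a : α, (μ (X ⁻¹' {a})).toReal = 1 := by
  have h := meas_eq_sum_inter μ (MeasurableSet.univ (α := Ω)) hX
  simp only [Set.univ_inter, measure_univ, ENNReal.toReal_one] at h
  exact h.symm

lemma submod {A : Ω → α} {B : Ω → β} {C : Ω → γ}
    (hA : Measurable A) (hB : Measurable B) (hC : Measurable C) :
    Hent μ (fun ω => (A ω, B ω, C ω)) + Hent μ B
      ≤ Hent μ (fun ω => (A ω, B ω)) + Hent μ (fun ω => (B ω, C ω)) := by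
  have hd := core_diff μ hA hB hC
  set p3 : α → β → γ → ℝ :=
    fun a b c => (μ (A ⁻¹' {a} ∩ B ⁻¹' {b} ∩ C ⁻¹' {c})).toReal with hp3
  set pAB : α → β → ℝ := fun a b => (μ (A ⁻¹' {a} ∩ B ⁻¹' {b})).toReal with hpAB
  set pBC : β → γ → ℝ := fun b c => (μ (B ⁻¹' {b} ∩ C ⁻¹' {c})).toReal with hpBC
  set pB : β → ℝ := fun b => (μ (B ⁻¹' {b})).toReal with hpB
  have mono : ∀ {s t : Set Ω}, s ⊆ t → (μ s).toReal ≤ (μ t).toReal := fun hst =>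
    ENNReal.toReal_mono (measure_ne_top μ _) (measure_mono hst)
  have le1 : ∀ a b c, p3 a b c ≤ pAB a b := fun a b c =>
    mono Set.inter_subset_left
  have le2 : ∀ a b c, p3 a b c ≤ pBC b c := fun a b c => by
    refine mono ?_; rintro ω ⟨⟨h1, h2⟩, h3⟩; exact ⟨h2, h3⟩
  have le3 : ∀ a b c, p3 a b c ≤ pB b := fun a b c => by
    refine mono ?_; rintro ω ⟨⟨h1, h2⟩, h3⟩; exact h2
  have mBC : ∀ b c, pBC b c = ∑ a, p3 a b c := by
    intro b c
    have h := meas_eq_sum_inter μ ((hB (measurableSet_singleton b)).inter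
      (hC (measurableSet_singleton c))) hA
    have hset : ∀ a : α, (B ⁻¹' {b} ∩ C ⁻¹' {c}) ∩ A ⁻¹' {a}
        = A ⁻¹' {a} ∩ B ⁻¹' {b} ∩ C ⁻¹' {c} := by
      intro a; ext ω; simp only [Set.mem_inter_iff, Set.mem_preimage,
        Set.mem_singleton_iff]; tauto
    simp only [hset] at h
    exact h
  have mB : ∀ b, pB b = ∑ c, pBC b c := fun b =>
    meas_eq_sum_inter μ (hB (measurableSet_singleton b)) hC
  have mB' : ∀ b, pB b = ∑ a, ∑ c, p3 a b c := by
    intro b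
    rw [Finset.sum_comm, mB b]
    exact Finset.sum_congr rfl fun c _ => mBC b c
  have mBA : ∀ b, pB b = ∑ a, pAB a b := by
    intro b
    have h := meas_eq_sum_inter μ (hB (measurableSet_singleton b)) hA
    have hset : ∀ a : α, B ⁻¹' {b} ∩ A ⁻¹' {a} = A ⁻¹' {a} ∩ B ⁻¹' {b} := fun a =>
      Set.inter_comm _ _
    simp only [hset] at h
    exact h
  -- the Gibbs bound
  have hgibbs := gibbs (Finset.univ : Finset (α × β × γ))
    (fun x => p3 x.1 x.2.1 x.2.2)
    (fun x => pAB x.1 x.2.1 * pBC x.2.1 x.2.2 / pB x.2.1)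
    (fun x _ => ENNReal.toReal_nonneg)
    (fun x _ => div_nonneg (mul_nonneg ENNReal.toReal_nonneg ENNReal.toReal_nonneg)
      ENNReal.toReal_nonneg)
    (fun x _ hne => by
      have h0 : 0 < p3 x.1 x.2.1 x.2.2 :=
        lt_of_le_of_ne ENNReal.toReal_nonneg (Ne.symm hne)
      have h1 : 0 < pAB x.1 x.2.1 := lt_of_lt_of_le h0 (le1 _ _ _)
      have h2 : 0 < pBC x.2.1 x.2.2 := lt_of_lt_of_le h0 (le2 _ _ _)
      have h3 : 0 < pB x.2.1 := lt_of_lt_of_le h0 (le3 _ _ _)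
      positivity)
  have hsumq : (∑ x : α × β × γ, pAB x.1 x.2.1 * pBC x.2.1 x.2.2 / pB x.2.1)
      ≤ ∑ x : α × β × γ, p3 x.1 x.2.1 x.2.2 := by
    have h1 : ∀ b, (∑ a, ∑ c, pAB a b * pBC b c / pB b) ≤ pB b := by
      intro b
      have : (∑ a, ∑ c, pAB a b * pBC b c / pB b)
          = (∑ a, pAB a b) * (∑ c, pBC b c) / pB b := by
        simp only [← Finset.sum_div, ← Finset.mul_sum, ← Finset.sum_mul]
      rw [this, ← mBA b, ← mB b]
      rcases eq_or_ne (pB b) 0 with h | h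
      · simp [h]
      · rw [mul_div_assoc, div_self h, mul_one]
    calc (∑ x : α × β × γ, pAB x.1 x.2.1 * pBC x.2.1 x.2.2 / pB x.2.1)
        = ∑ a, ∑ b, ∑ c, pAB a b * pBC b c / pB b := by
          simp only [Fintype.sum_prod_type]
      _ = ∑ b, ∑ a, ∑ c, pAB a b * pBC b c / pB b := Finset.sum_comm
      _ ≤ ∑ b, pB b := Finset.sum_le_sum fun b _ => h1 b
      _ = ∑ b, ∑ a, ∑ c, p3 a b c := Finset.sum_congr rfl fun b _ => mB' b
      _ = ∑ a, ∑ b, ∑ c, p3 a b c := Finset.sum_comm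
      _ = ∑ x : α × β × γ, p3 x.1 x.2.1 x.2.2 := by
          simp only [Fintype.sum_prod_type]
  have hpos : 0 ≤ ∑ x : α × β × γ,
      p3 x.1 x.2.1 x.2.2 *
        (Real.log (p3 x.1 x.2.1 x.2.2)
          - Real.log (pAB x.1 x.2.1 * pBC x.2.1 x.2.2 / pB x.2.1)) := by
    have := hgibbs
    have hrev : (∑ x : α × β × γ,
        p3 x.1 x.2.1 x.2.2 *
          (Real.log (p3 x.1 x.2.1 x.2.2)
            - Real.log (pAB x.1 x.2.1 * pBC x.2.1 x.2.2 / pB x.2.1)))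
        = -∑ x : α × β × γ,
            p3 x.1 x.2.1 x.2.2 *
              (Real.log (pAB x.1 x.2.1 * pBC x.2.1 x.2.2 / pB x.2.1)
                - Real.log (p3 x.1 x.2.1 x.2.2)) := by
      rw [← Finset.sum_neg_distrib]
      exact Finset.sum_congr rfl fun x _ => by ring
    rw [hrev]
    linarith
  rw [Hent_triple_eq, Hent_pair_eq, Hent_pair_eq]
  have hBe : Hent μ B = ∑ b : β, Real.negMulLog (μ (B ⁻¹' {b})).toReal := rfl
  rw [hBe]
  linarith [hd, hpos]


lemma ci_core {A : Ω → α} {B : Ω → β} {C : Ω → γ}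
    (hA : Measurable A) (hB : Measurable B) (hC : Measurable C)
    (hci : ∀ (a : α) (c : γ) (b : β),
      μ (B ⁻¹' {b}) * μ {ω | A ω = a ∧ C ω = c ∧ B ω = b}
        = μ {ω | A ω = a ∧ B ω = b} * μ {ω | C ω = c ∧ B ω = b}) :
    Hent μ (fun ω => (A ω, B ω)) + Hent μ (fun ω => (B ω, C ω))
      = Hent μ (fun ω => (A ω, B ω, C ω)) + Hent μ B := by
  have hd := core_diff μ hA hB hC
  set p3 : α → β → γ → ℝ :=
    fun a b c => (μ (A ⁻¹' {a} ∩ B ⁻¹' {b} ∩ C ⁻¹' {c})).toReal with hp3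
  set pAB : α → β → ℝ := fun a b => (μ (A ⁻¹' {a} ∩ B ⁻¹' {b})).toReal with hpAB
  set pBC : β → γ → ℝ := fun b c => (μ (B ⁻¹' {b} ∩ C ⁻¹' {c})).toReal with hpBC
  set pB : β → ℝ := fun b => (μ (B ⁻¹' {b})).toReal with hpB
  have mono : ∀ {s t : Set Ω}, s ⊆ t → (μ s).toReal ≤ (μ t).toReal := fun hst =>
    ENNReal.toReal_mono (measure_ne_top μ _) (measure_mono hst)
  have le3 : ∀ a b c, p3 a b c ≤ pB b := fun a b c => by
    refine mono ?_; rintro ω ⟨⟨h1, h2⟩, h3⟩; exact h2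
  have hreal : ∀ a b c, pB b * p3 a b c = pAB a b * pBC b c := by
    intro a b c
    have h := hci a c b
    have s1 : {ω | A ω = a ∧ C ω = c ∧ B ω = b}
        = A ⁻¹' {a} ∩ B ⁻¹' {b} ∩ C ⁻¹' {c} := by
      ext ω; simp only [Set.mem_setOf_eq, Set.mem_inter_iff, Set.mem_preimage,
        Set.mem_singleton_iff]; tauto
    have s2 : {ω | A ω = a ∧ B ω = b} = A ⁻¹' {a} ∩ B ⁻¹' {b} := by
      ext ω; simp only [Set.mem_setOf_eq, Set.mem_inter_iff, Set.mem_preimage,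
        Set.mem_singleton_iff]
    have s3 : {ω | C ω = c ∧ B ω = b} = B ⁻¹' {b} ∩ C ⁻¹' {c} := by
      ext ω; simp only [Set.mem_setOf_eq, Set.mem_inter_iff, Set.mem_preimage,
        Set.mem_singleton_iff]; tauto
    rw [s1, s2, s3] at h
    have := congrArg ENNReal.toReal h
    rwa [ENNReal.toReal_mul, ENNReal.toReal_mul] at this
  have hzero : (∑ x : α × β × γ,
      p3 x.1 x.2.1 x.2.2 *
        (Real.log (p3 x.1 x.2.1 x.2.2)
          - Real.log (pAB x.1 x.2.1 * pBC x.2.1 x.2.2 / pB x.2.1))) = 0 := by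
    refine Finset.sum_eq_zero fun x _ => ?_
    obtain ⟨a, b, c⟩ := x
    rcases eq_or_ne (p3 a b c) 0 with h0 | h0
    · simp only [h0, zero_mul]
    · have hpos : 0 < p3 a b c := lt_of_le_of_ne ENNReal.toReal_nonneg (Ne.symm h0)
      have hB0 : 0 < pB b := lt_of_lt_of_le hpos (le3 a b c)
      have hq : pAB a b * pBC b c / pB b = p3 a b c := by
        rw [← hreal a b c, mul_comm, mul_div_assoc, div_self (ne_of_gt hB0), mul_one]
      rw [hq, sub_self, mul_zero]
  rw [Hent_triple_eq, Hent_pair_eq, Hent_pair_eq]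
  have hBe : Hent μ B = ∑ b : β, Real.negMulLog (μ (B ⁻¹' {b})).toReal := rfl
  rw [hBe]
  linarith [hd, hzero]

lemma Hent_pair_indep {X : Ω → α} {Y : Ω → β}
    (hX : Measurable X) (hY : Measurable Y) (hind : IndepFun X Y μ) :
    Hent μ (fun ω => (X ω, Y ω)) = Hent μ X + Hent μ Y := by
  have hmul : ∀ (a : α) (b : β), (μ (X ⁻¹' {a} ∩ Y ⁻¹' {b})).toReal
      = (μ (X ⁻¹' {a})).toReal * (μ (Y ⁻¹' {b})).toReal := by
    intro a b
    rw [hind.measure_inter_preimage_eq_mul _ _ (measurableSet_singleton a)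
      (measurableSet_singleton b), ENNReal.toReal_mul]
  rw [Hent_pair_eq]
  calc (∑ y : α × β, Real.negMulLog (μ (X ⁻¹' {y.1} ∩ Y ⁻¹' {y.2})).toReal)
      = ∑ a, ∑ b, ((μ (Y ⁻¹' {b})).toReal * Real.negMulLog (μ (X ⁻¹' {a})).toReal
          + (μ (X ⁻¹' {a})).toReal * Real.negMulLog (μ (Y ⁻¹' {b})).toReal) := by
        rw [Fintype.sum_prod_type]
        refine Finset.sum_congr rfl fun a _ => Finset.sum_congr rfl fun b _ => ?_
        rw [hmul a b, Real.negMulLog_mul]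
    _ = ∑ a, ((∑ b, (μ (Y ⁻¹' {b})).toReal) * Real.negMulLog (μ (X ⁻¹' {a})).toReal
          + (μ (X ⁻¹' {a})).toReal * ∑ b, Real.negMulLog (μ (Y ⁻¹' {b})).toReal) := by
        refine Finset.sum_congr rfl fun a _ => ?_
        rw [Finset.sum_add_distrib, ← Finset.sum_mul, ← Finset.mul_sum]
    _ = ∑ a, (Real.negMulLog (μ (X ⁻¹' {a})).toReal
          + (μ (X ⁻¹' {a})).toReal * Hent μ Y) := by
        refine Finset.sum_congr rfl fun a _ => ?_
        rw [sum_probs μ hY, one_mul]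
        rfl
    _ = Hent μ X + (∑ a, (μ (X ⁻¹' {a})).toReal) * Hent μ Y := by
        rw [Finset.sum_add_distrib, ← Finset.sum_mul]
        rfl
    _ = Hent μ X + Hent μ Y := by rw [sum_probs μ hX, one_mul]

omit [IsProbabilityMeasure μ]
  [MeasurableSpace α] [MeasurableSingletonClass α]
  [MeasurableSpace β] [MeasurableSingletonClass β]
  [MeasurableSpace γ] [MeasurableSingletonClass γ] in
lemma Hent_unif [Nonempty α] {X : Ω → α}
    (h : ∀ a : α, μ (X ⁻¹' {a}) = ((Fintype.card α : ENNReal))⁻¹) :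
    Hent μ X = Real.log (Fintype.card α) := by
  have hcard : (0:ℝ) < (Fintype.card α : ℝ) := by
    exact_mod_cast Fintype.card_pos
  have htr : ((Fintype.card α : ENNReal)⁻¹).toReal = ((Fintype.card α : ℝ))⁻¹ := by
    rw [ENNReal.toReal_inv]
    norm_num
  unfold Hent
  simp only [h, htr]
  rw [Finset.sum_const, Finset.card_univ, nsmul_eq_mul]
  rw [Real.negMulLog, Real.log_inv]
  field_simp

end Helpers

/-- Lemma 1 of the paper: upper bound on the information leakage of the nested
wiretap code, abstracted to one block. -/
theorem leakage_upper_bound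
    {Ω : Type*} [MeasurableSpace Ω] (μ : Measure Ω) [IsProbabilityMeasure μ]
    {𝓜s 𝓜r 𝓓 𝓩 : Type*}
    [Fintype 𝓜s] [Nonempty 𝓜s] [MeasurableSpace 𝓜s] [MeasurableSingletonClass 𝓜s]
    [Fintype 𝓜r] [Nonempty 𝓜r] [MeasurableSpace 𝓜r] [MeasurableSingletonClass 𝓜r]
    [Fintype 𝓓] [Nonempty 𝓓] [MeasurableSpace 𝓓] [MeasurableSingletonClass 𝓓]
    [Fintype 𝓩] [Nonempty 𝓩] [MeasurableSpace 𝓩] [MeasurableSingletonClass 𝓩]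
    (Ms : Ω → 𝓜s) (Mr : Ω → 𝓜r) (D : Ω → 𝓓) (Z : Ω → 𝓩)
    (hMs : Measurable Ms) (hMr : Measurable Mr) (hD : Measurable D) (hZ : Measurable Z)
    -- (i) uniform secret and dummy messages, independent of each other
    (hunifS : ∀ m : 𝓜s, μ (Ms ⁻¹' {m}) = ((Fintype.card 𝓜s : ENNReal))⁻¹)
    (hunifR : ∀ m : 𝓜r, μ (Mr ⁻¹' {m}) = ((Fintype.card 𝓜r : ENNReal))⁻¹)
    (hindep : IndepFun Ms Mr μ)
    -- (ii) the codeword is a deterministic function of the messages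
    (f : 𝓜s × 𝓜r → 𝓓) (hf : ∀ᵐ ω ∂μ, D ω = f (Ms ω, Mr ω))
    -- (iii) the dummy message is systematically contained in the codeword
    (g : 𝓓 → 𝓜r) (hg : ∀ᵐ ω ∂μ, Mr ω = g (D ω))
    -- (iv) (Ms, Mr) ⟂ Z given D
    (hCI : ∀ (a : 𝓜s × 𝓜r) (z : 𝓩) (d : 𝓓),
      μ (D ⁻¹' {d}) * μ {ω | (Ms ω, Mr ω) = a ∧ Z ω = z ∧ D ω = d}
        = μ {ω | (Ms ω, Mr ω) = a ∧ D ω = d} * μ {ω | Z ω = z ∧ D ω = d})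
    -- (v) Fano-type bound for the fictitious receiver
    (ε : ℝ) (hε0 : 0 ≤ ε) (hε1 : ε ≤ 1)
    (hFano : Hcond μ Mr (fun ω => (Ms ω, Z ω))
      ≤ Real.log 2 + ε * Real.log (Fintype.card 𝓜r)) :
    MutInf μ Ms Z
      ≤ MutInf μ D Z - (1 - ε) * Real.log (Fintype.card 𝓜r) + Real.log 2 := by
  have hX : Measurable (fun ω => (Ms ω, Mr ω)) := hMs.prodMk hMr
  -- chain rule for the Fano term
  have key1 : Hcond μ Mr (fun ω => (Ms ω, Z ω))
      = Hent μ (fun ω => ((Ms ω, Mr ω), Z ω)) - Hent μ (fun ω => (Ms ω, Z ω)) := by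
    unfold Hcond
    congr 1
    exact Hent_congr μ
      { toFun := fun x : (𝓜s × 𝓜r) × 𝓩 => (x.1.2, (x.1.1, x.2))
        invFun := fun y : 𝓜r × 𝓜s × 𝓩 => ((y.2.1, y.1), y.2.2)
        left_inv := fun x => rfl
        right_inv := fun y => rfl } (fun ω => rfl)
  -- submodularity (data processing part 1)
  have key2 : Hent μ (fun ω => ((Ms ω, Mr ω), D ω, Z ω))
      + Hent μ (fun ω => (Ms ω, Mr ω))
      ≤ Hent μ (fun ω => ((Ms ω, Mr ω), Z ω))
        + Hent μ (fun ω => ((Ms ω, Mr ω), D ω)) := by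
    have h := submod μ (A := Z) (B := fun ω => (Ms ω, Mr ω)) (C := D) hZ hX hD
    have ha : Hent μ (fun ω => (Z ω, (Ms ω, Mr ω), D ω))
        = Hent μ (fun ω => ((Ms ω, Mr ω), D ω, Z ω)) :=
      Hent_congr μ
        { toFun := fun x : (𝓜s × 𝓜r) × 𝓓 × 𝓩 => (x.2.2, (x.1, x.2.1))
          invFun := fun y : 𝓩 × (𝓜s × 𝓜r) × 𝓓 => (y.2.1, (y.2.2, y.1))
          left_inv := fun x => rfl
          right_inv := fun y => rfl } (fun ω => rfl)
    have hb : Hent μ (fun ω => (Z ω, (Ms ω, Mr ω)))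
        = Hent μ (fun ω => ((Ms ω, Mr ω), Z ω)) :=
      Hent_congr μ (Equiv.prodComm _ _) (fun ω => rfl)
    rw [ha, hb] at h
    linarith
  -- conditional independence (data processing part 2)
  have key3 : Hent μ (fun ω => ((Ms ω, Mr ω), D ω)) + Hent μ (fun ω => (D ω, Z ω))
      = Hent μ (fun ω => ((Ms ω, Mr ω), D ω, Z ω)) + Hent μ D :=
    ci_core μ (A := fun ω => (Ms ω, Mr ω)) (B := D) (C := Z) hX hD hZ hCI
  -- entropy of the message pair
  have hXent : Hent μ (fun ω => (Ms ω, Mr ω))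
      = Hent μ Ms + Real.log (Fintype.card 𝓜r) := by
    rw [Hent_pair_indep μ hMs hMr hindep, Hent_unif μ hunifR]
  rw [key1] at hFano
  unfold MutInf
  linarith
end

section
/- Let M, X, Y, Z be random variables on a probability space taking values in finite nonempty types, with M uniformly distributed on a finite nonempty type 𝓜 and M = h(X) almost surely for some function h. Then log |𝓜| ≤ I(X; Y) − I(X; Z) + H(X | Y) + I(M; Z). -/
open MeasureTheory ProbabilityTheory Real

lemma negMulLog_add_le' {x y : ℝ} (hx : 0 ≤ x) (hy : 0 ≤ y) :
    Real.negMulLog (x + y) ≤ Real.negMulLog x + Real.negMulLog y := by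
  have key : ∀ a b : ℝ, 0 ≤ a → 0 ≤ b → -a * Real.log (a + b) ≤ Real.negMulLog a := by
    intro a b ha hb
    rcases eq_or_lt_of_le ha with h0 | h0
    · simp [← h0, Real.negMulLog]
    · have : Real.log a ≤ Real.log (a + b) := Real.log_le_log h0 (by linarith)
      have := mul_le_mul_of_nonneg_left this ha
      simp only [Real.negMulLog, neg_mul]
      linarith
  have h1 := key x y hx hy
  have h2 := key y x hy hx
  have : Real.negMulLog (x + y) = -x * Real.log (x + y) + -y * Real.log (x + y) := by
    simp [Real.negMulLog]; ring
  rw [add_comm y x] at h2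
  linarith

lemma negMulLog_sum_le' {ι : Type*} (s : Finset ι) (f : ι → ℝ) (hf : ∀ i ∈ s, 0 ≤ f i) :
    Real.negMulLog (∑ i ∈ s, f i) ≤ ∑ i ∈ s, Real.negMulLog (f i) := by
  induction s using Finset.cons_induction with
  | empty => simp
  | cons a s ha ih =>
    rw [Finset.sum_cons, Finset.sum_cons]
    have h1 : 0 ≤ f a := hf a (Finset.mem_cons_self a s)
    have h2 : ∀ i ∈ s, 0 ≤ f i := fun i hi => hf i (Finset.mem_cons_of_mem hi)
    have h3 : 0 ≤ ∑ i ∈ s, f i := Finset.sum_nonneg h2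
    calc Real.negMulLog (f a + ∑ i ∈ s, f i)
        ≤ Real.negMulLog (f a) + Real.negMulLog (∑ i ∈ s, f i) := negMulLog_add_le' h1 h3
      _ ≤ Real.negMulLog (f a) + ∑ i ∈ s, Real.negMulLog (f i) := by linarith [ih h2]

lemma Hent_congr_s4 {Ω : Type*} [MeasurableSpace Ω] (μ : Measure Ω)
    {α : Type*} [Fintype α] {W W' : Ω → α} (hWW : ∀ᵐ ω ∂μ, W ω = W' ω) :
    Hent μ W = Hent μ W' := by
  unfold Hent
  congr 1
  ext a
  congr 2
  exact measure_congr (hWW.mono fun ω hω => by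
    show (W ω ∈ ({a} : Set α)) = (W' ω ∈ ({a} : Set α))
    rw [hω])

lemma Hent_comp_le {Ω : Type*} [MeasurableSpace Ω] (μ : Measure Ω) [IsProbabilityMeasure μ]
    {α β : Type*} [Fintype α] [MeasurableSpace α] [MeasurableSingletonClass α]
    [Fintype β] {W : Ω → α} (hW : Measurable W) (g : α → β) :
    Hent μ (fun ω => g (W ω)) ≤ Hent μ W := by
  classical
  unfold Hent
  rw [← Finset.sum_fiberwise Finset.univ g (fun a => Real.negMulLog (μ (W ⁻¹' {a})).toReal)]
  apply Finset.sum_le_sum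
  intro b _
  have hset : (fun ω => g (W ω)) ⁻¹' {b} = ⋃ a ∈ Finset.univ.filter (fun a => g a = b), W ⁻¹' {a} := by
    ext ω
    simp [Set.mem_preimage, eq_comm]
  have hmeas : μ ((fun ω => g (W ω)) ⁻¹' {b})
      = ∑ a ∈ Finset.univ.filter (fun a => g a = b), μ (W ⁻¹' {a}) := by
    rw [hset]
    exact measure_biUnion_finset
      (fun a _ a' _ haa => Set.disjoint_left.mpr (fun ω h1 h2 => haa (by
        simp only [Set.mem_preimage, Set.mem_singleton_iff] at h1 h2; rw [← h1, ← h2])))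
      (fun a _ => hW (measurableSet_singleton a))
  rw [hmeas, ENNReal.toReal_sum (fun a _ => measure_ne_top μ _)]
  exact negMulLog_sum_le' _ _ (fun a _ => ENNReal.toReal_nonneg)

set_option maxHeartbeats 1000000

/-- Remark 3 of the paper: for a uniform secret message `M` determined by the
codeword `X`, `log |𝓜| ≤ I(X; Y) - I(X; Z) + H(X | Y) + I(M; Z)`. -/
theorem secure_rate_benchmark
    {Ω : Type*} [MeasurableSpace Ω] (μ : Measure Ω) [IsProbabilityMeasure μ]
    {𝓜 𝓧 𝓨 𝓩 : Type*}
    [Fintype 𝓜] [Nonempty 𝓜] [MeasurableSpace 𝓜] [MeasurableSingletonClass 𝓜]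
    [Fintype 𝓧] [Nonempty 𝓧] [MeasurableSpace 𝓧] [MeasurableSingletonClass 𝓧]
    [Fintype 𝓨] [Nonempty 𝓨] [MeasurableSpace 𝓨] [MeasurableSingletonClass 𝓨]
    [Fintype 𝓩] [Nonempty 𝓩] [MeasurableSpace 𝓩] [MeasurableSingletonClass 𝓩]
    (M : Ω → 𝓜) (X : Ω → 𝓧) (Y : Ω → 𝓨) (Z : Ω → 𝓩)
    (hM : Measurable M) (hX : Measurable X) (hY : Measurable Y) (hZ : Measurable Z)
    (hunif : ∀ m : 𝓜, μ (M ⁻¹' {m}) = ((Fintype.card 𝓜 : ENNReal))⁻¹)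
    (h : 𝓧 → 𝓜) (hh : ∀ᵐ ω ∂μ, M ω = h (X ω)) :
    Real.log (Fintype.card 𝓜)
      ≤ MutInf μ X Y - MutInf μ X Z + Hcond μ X Y + MutInf μ M Z := by
  have hc0 : (Fintype.card 𝓜 : ℝ) ≠ 0 := Nat.cast_ne_zero.mpr Fintype.card_ne_zero
  have hM_ent : Hent μ M = Real.log (Fintype.card 𝓜) := by
    unfold Hent
    have hval : ∀ m : 𝓜, (μ (M ⁻¹' {m})).toReal = (Fintype.card 𝓜 : ℝ)⁻¹ := by
      intro m; rw [hunif m]; simp [ENNReal.toReal_inv]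
    simp only [hval, Real.negMulLog, Real.log_inv, Finset.sum_const, Finset.card_univ,
      nsmul_eq_mul]
    field_simp
  have key : Hent μ (fun ω => (M ω, Z ω)) ≤ Hent μ (fun ω => (X ω, Z ω)) := by
    have e1 : Hent μ (fun ω => (M ω, Z ω))
        = Hent μ (fun ω => (fun p : 𝓧 × 𝓩 => (h p.1, p.2)) ((X ω, Z ω))) :=
      Hent_congr_s4 μ (hh.mono fun ω hω => by simp [hω])
    rw [e1]
    exact Hent_comp_le μ (hX.prodMk hZ) (fun p : 𝓧 × 𝓩 => (h p.1, p.2))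
  unfold MutInf Hcond
  linarith [hM_ent, key]
end

section
/- Let n and ν be natural numbers with 0 < ν < n, let g : ℕ → ℂ, let (W(t))_{t ∈ ℤ} be an independent family of ℂ-valued random variables on a probability space, and let x : ℤ → ℂ be a deterministic sequence with x(s) = 0 whenever s = n·t − r for some t ∈ ℤ and r ∈ {0, 1, …, ν − 1}. Define Y(t) = ∑_{r=0}^{ν} g(r)·x(t − r) + W(t) for all t ∈ ℤ, and for each j ∈ ℤ define the j-th output block Y_j = (Y(n(j−1)+1), …, Y(nj)) ∈ ℂ^n. Then: (i) the family of random vectors (Y_j)_{j ∈ ℤ} is independent; and (ii) for each j, the law of Y_j is a function only of the restriction of x to the block {n(j−1)+1, …, nj} and of the laws of (W(n(j−1)+1), …, W(nj)); that is, if x' is another sequence satisfying the same zero-padding condition and agreeing with x on block j, then the corresponding output block Y'_j has the same law as Y_j. -/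
open MeasureTheory ProbabilityTheory

/-- Noisy ISI channel output `Y(t) = ∑_{r=0}^{ν} g(r)·x(t-r) + W(t)`. -/
noncomputable def noisyOut {Ω : Type*} (ν : ℕ) (g : ℕ → ℂ) (x : ℤ → ℂ)
    (W : ℤ → Ω → ℂ) (t : ℤ) (ω : Ω) : ℂ :=
  (∑ r ∈ Finset.range (ν + 1), g r * x (t - (r : ℤ))) + W t ω

/-- The `j`-th length-`n` output block `Y_j = (Y(n(j-1)+1), …, Y(nj))`. -/
noncomputable def blockOut {Ω : Type*} (n ν : ℕ) (g : ℕ → ℂ) (x : ℤ → ℂ)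
    (W : ℤ → Ω → ℂ) (j : ℤ) (ω : Ω) : Fin n → ℂ :=
  fun i => noisyOut ν g x W ((n : ℤ) * (j - 1) + 1 + (i : ℤ)) ω

/-- Grouping lemma: an independent family of σ-algebras indexed by `κ`,
regrouped along pairwise disjoint sets of indices, is independent. -/
lemma iIndep_biSup_of_disjoint {Ω ι κ : Type*} {mΩ : MeasurableSpace Ω}
    {μ : Measure Ω} [IsProbabilityMeasure μ]
    (m : κ → MeasurableSpace Ω) (h_le : ∀ t, m t ≤ mΩ)
    (h_indep : iIndep m μ) (B : ι → Set κ)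
    (hB : ∀ j j', j ≠ j' → Disjoint (B j) (B j')) :
    iIndep (fun j => ⨆ t ∈ B j, m t) μ := by
  classical
  rw [iIndep_iff]
  intro s
  induction s using Finset.induction_on with
  | empty => intro f _; simp
  | @insert a s' ha ih =>
    intro f hf
    have hdisj : Disjoint (B a) (⋃ i ∈ (s' : Set ι), B i) := by
      refine Set.disjoint_iUnion₂_right.2 fun i hi => hB a i ?_
      rintro rfl; exact ha hi
    have hind : Indep (⨆ t ∈ B a, m t) (⨆ t ∈ ⋃ i ∈ (s' : Set ι), B i, m t) μ :=
      indep_iSup_of_disjoint h_le h_indep hdisj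
    have h1 : MeasurableSet[⨆ t ∈ B a, m t] (f a) :=
      hf a (Finset.mem_insert_self a s')
    have hmono : ∀ i ∈ s', (⨆ t ∈ B i, m t) ≤ ⨆ t ∈ ⋃ i ∈ (s' : Set ι), B i, m t := by
      intro i hi
      refine iSup₂_le fun t ht => le_iSup₂_of_le t ?_ le_rfl
      exact Set.mem_biUnion hi ht
    have h2 : MeasurableSet[⨆ t ∈ ⋃ i ∈ (s' : Set ι), B i, m t] (⋂ i ∈ s', f i) := by
      refine MeasurableSet.biInter s'.countable_toSet fun i hi => ?_
      exact hmono i hi _ (hf i (Finset.mem_insert_of_mem hi))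
    rw [Finset.set_biInter_insert, Finset.prod_insert ha,
      ((Indep_iff _ _ _).1 hind) _ _ h1 h2,
      ih (fun i hi => hf i (Finset.mem_insert_of_mem hi))]

/-- Appendix B of the paper (equations (20)–(21)): with independent noise and an
input zero-padded on the last `ν` positions of every length-`n` block, (i) the
length-`n` output blocks form an independent family, and (ii) the law of each
output block depends only on the input symbols of that block: replacing the
input by any other zero-padded sequence agreeing on block `j` leaves the law of
the `j`-th output block unchanged. -/
theorem blockOut_iIndep_and_law_local
    {Ω : Type*} [MeasurableSpace Ω] (μ : Measure Ω) [IsProbabilityMeasure μ]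
    (n ν : ℕ) (hν : 0 < ν) (hn : ν < n) (g : ℕ → ℂ)
    (W : ℤ → Ω → ℂ) (hWmeas : ∀ t : ℤ, Measurable (W t))
    (hWindep : iIndepFun W μ)
    (x : ℤ → ℂ)
    (hx : ∀ (t : ℤ) (r : ℕ), r < ν → x ((n : ℤ) * t - (r : ℤ)) = 0) :
    iIndepFun (blockOut n ν g x W) μ
    ∧ ∀ (x' : ℤ → ℂ),
        (∀ (t : ℤ) (r : ℕ), r < ν → x' ((n : ℤ) * t - (r : ℤ)) = 0) →
        ∀ j : ℤ,
          (∀ s : ℤ, (n : ℤ) * (j - 1) + 1 ≤ s → s ≤ (n : ℤ) * j → x s = x' s) →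
          Measure.map (blockOut n ν g x W j) μ
            = Measure.map (blockOut n ν g x' W j) μ := by
  classical
  set τ : ℤ → Fin n → ℤ := fun j i => (n : ℤ) * (j - 1) + 1 + (i : ℤ) with hτ
  constructor
  · -- independence of blocks
    set M : ℤ → MeasurableSpace Ω :=
      fun j => ⨆ i : Fin n, MeasurableSpace.comap (W (τ j i)) inferInstance with hM
    have hdisj : ∀ j j' : ℤ, j ≠ j' → Disjoint (Set.range (τ j)) (Set.range (τ j')) := by
      intro j j' hjj'
      rw [Set.disjoint_left]
      rintro s ⟨i, rfl⟩ ⟨i', heq⟩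
      apply hjj'
      have h1 : (n : ℤ) * (j' - j) = (i : ℤ) - (i' : ℤ) := by
        simp only [hτ] at heq; linear_combination heq
      have hi : (i : ℤ) < n := by exact_mod_cast i.isLt
      have hi' : (i' : ℤ) < n := by exact_mod_cast i'.isLt
      have hi0 : (0 : ℤ) ≤ (i : ℤ) := Int.ofNat_nonneg _
      have hi'0 : (0 : ℤ) ≤ (i' : ℤ) := Int.ofNat_nonneg _
      have hn0 : (0 : ℤ) ≤ n := Int.ofNat_nonneg _
      by_contra hne
      rcases lt_or_gt_of_ne (fun h : j' = j => hne h.symm) with h | h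
      · have h2 : j' - j ≤ -1 := by omega
        have : (n : ℤ) * (j' - j) ≤ (n : ℤ) * (-1) :=
          mul_le_mul_of_nonneg_left h2 hn0
        omega
      · have h2 : 1 ≤ j' - j := by omega
        have : (n : ℤ) * 1 ≤ (n : ℤ) * (j' - j) :=
          mul_le_mul_of_nonneg_left h2 hn0
        omega
    have hgrp := iIndep_biSup_of_disjoint
      (fun t => MeasurableSpace.comap (W t) inferInstance)
      (fun t => (hWmeas t).comap_le) hWindep.iIndep (fun j => Set.range (τ j)) hdisj
    have hMeq : (fun j : ℤ => ⨆ t ∈ Set.range (τ j),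
        MeasurableSpace.comap (W t) inferInstance) = M := by
      funext j; rw [iSup_range]
    rw [hMeq] at hgrp
    have hle : ∀ j : ℤ, MeasurableSpace.comap (blockOut n ν g x W j)
        MeasurableSpace.pi ≤ M j := by
      intro j
      have hmeas : @Measurable Ω (Fin n → ℂ) (M j) _ (blockOut n ν g x W j) := by
        refine (@measurable_pi_iff Ω (Fin n) (fun _ => ℂ) (M j) _ _).mpr fun i => ?_
        have : (fun ω => blockOut n ν g x W j ω i)
            = fun ω => (∑ r ∈ Finset.range (ν + 1), g r * x (τ j i - (r : ℤ))) + W (τ j i) ω := by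
          funext ω; rfl
        rw [this]
        exact Measurable.add measurable_const
          (measurable_iff_comap_le.mpr (le_iSup (fun i => MeasurableSpace.comap (W (τ j i)) inferInstance) i))
      exact measurable_iff_comap_le.mp hmeas
    rw [iIndepFun_iff_iIndep, iIndep_iff]
    intro s f hf
    exact (iIndep_iff M μ).1 hgrp s (fun j hj => hle j _ (hf j hj))
  · -- locality of the law
    intro x' hx' j hagree
    have hfun : blockOut n ν g x W j = blockOut n ν g x' W j := by
      funext ω i
      simp only [blockOut, noisyOut]
      congr 1
      refine Finset.sum_congr rfl fun r hr => ?_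
      rw [Finset.mem_range] at hr
      have hrν : r ≤ ν := Nat.lt_succ_iff.mp hr
      have hi : (i : ℕ) < n := i.isLt
      by_cases hri : (r : ℤ) ≤ (i : ℤ)
      · -- index stays in block j
        congr 1
        apply hagree
        · push_cast; omega
        · push_cast
          have : (i : ℤ) < n := by exact_mod_cast hi
          have : (r : ℤ) ≥ 0 := Int.ofNat_nonneg _
          nlinarith [this]
      · -- index falls in the zero padding of block j-1
        have hir : (i : ℕ) + 1 ≤ r := by
          by_contra h
          exact hri (by exact_mod_cast Nat.lt_succ_iff.mp (not_le.mp h))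
        set r' : ℕ := r - ((i : ℕ) + 1) with hr'
        have hr'ν : r' < ν := by omega
        have hidx : (n : ℤ) * (j - 1) + 1 + (i : ℤ) - (r : ℤ)
            = (n : ℤ) * (j - 1) - (r' : ℤ) := by
          push_cast [hr']; omega
        rw [hidx, hx (j - 1) r' hr'ν, hx' (j - 1) r' hr'ν]
    rw [hfun]
end
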